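/- Let S ∈ ℝ^{p×m} with p ≥ m, and let U Λ U^T be the truncated eigendecomposition of S S^T (U ∈ ℝ^{p×m} with orthonormal columns, Λ ∈ ℝ^{m×m} diagonal positive definite). Then for any invertible H ∈ ℝ^{p×p}, the Moore–Penrose pseudoinverse satisfies λ_max((H S S^T)^†) ≤ λ_max((S S^T)^†) · λ_max(H⁻¹), provided H is symmetric positive definite. -/

import Mathlib

open Matrix

/-- `P` is the Moore–Penrose pseudoinverse of `M` (Penrose conditions). -/
def IsMoorePenrose {p : ℕ} (M P : Matrix (Fin p) (Fin p) ℝ) : Prop :=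
  M * P * M = M ∧ P * M * P = P ∧ (M * P)ᵀ = M * P ∧ (P * M)ᵀ = P * M

section Aux

variable {p : ℕ} [NeZero p]

/-- Cauchy–Schwarz for dotProduct. -/
lemma dot_cs (a b : Fin p → ℝ) :
    a ⬝ᵥ b ≤ Real.sqrt (a ⬝ᵥ a) * Real.sqrt (b ⬝ᵥ b) := by
  have h := Finset.sum_mul_sq_le_sq_mul_sq Finset.univ a b
  have h1 : a ⬝ᵥ b ≤ |a ⬝ᵥ b| := le_abs_self _
  refine h1.trans ?_
  have hnn : (0:ℝ) ≤ a ⬝ᵥ a := Finset.sum_nonneg fun i _ => mul_self_nonneg _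
  rw [← Real.sqrt_sq_eq_abs, ← Real.sqrt_mul hnn]
  apply Real.sqrt_le_sqrt
  simpa [dotProduct, pow_two] using h

lemma unitary_dot (U : Matrix (Fin p) (Fin p) ℝ) (hU : U ∈ Matrix.unitaryGroup (Fin p) ℝ)
    (a b : Fin p → ℝ) : (U *ᵥ a) ⬝ᵥ (U *ᵥ b) = a ⬝ᵥ b := by
  rw [Matrix.dotProduct_mulVec, ← Matrix.mulVec_transpose, Matrix.mulVec_mulVec]
  have : Uᵀ * U = 1 := by
    have := (Matrix.mem_unitaryGroup_iff'.mp hU)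
    simpa [Matrix.star_eq_conjTranspose] using this
  rw [this, Matrix.one_mulVec]

lemma psd_sup_nonneg {B : Matrix (Fin p) (Fin p) ℝ} (hB : B.PosSemidef) :
    0 ≤ ⨆ i, hB.1.eigenvalues i := by
  have i : Fin p := ⟨0, Nat.pos_of_ne_zero (NeZero.ne p)⟩
  exact le_trans (hB.eigenvalues_nonneg i)
    (le_ciSup (Set.Finite.bddAbove (Set.finite_range _)) i)

/-- Norm bound: `√(Bw ⬝ Bw) ≤ λmax(B) √(w ⬝ w)` for PSD `B`. -/
lemma psd_mulVec_bound {B : Matrix (Fin p) (Fin p) ℝ} (hB : B.PosSemidef) (w : Fin p → ℝ) :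
    Real.sqrt ((B *ᵥ w) ⬝ᵥ (B *ᵥ w)) ≤ (⨆ i, hB.1.eigenvalues i) * Real.sqrt (w ⬝ᵥ w) := by
  set U := hB.1.eigenvectorUnitary with hUdef
  have hU : (U : Matrix (Fin p) (Fin p) ℝ) ∈ Matrix.unitaryGroup (Fin p) ℝ := U.2
  set lam := ⨆ i, hB.1.eigenvalues i with hlam
  have hle : ∀ i, hB.1.eigenvalues i ≤ lam := fun i =>
    le_ciSup (Set.Finite.bddAbove (Set.finite_range _)) i
  have hnn : ∀ i, 0 ≤ hB.1.eigenvalues i := hB.eigenvalues_nonneg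
  have hspec := hB.1.spectral_theorem
  set c : Fin p → ℝ := (star (U : Matrix (Fin p) (Fin p) ℝ)) *ᵥ w with hc
  have hwc : w = (U : Matrix (Fin p) (Fin p) ℝ) *ᵥ c := by
    rw [hc, Matrix.mulVec_mulVec]
    rw [Matrix.mem_unitaryGroup_iff.mp hU, Matrix.one_mulVec]
  have hBw : B *ᵥ w = (U : Matrix (Fin p) (Fin p) ℝ) *ᵥ
      ((Matrix.diagonal (RCLike.ofReal ∘ hB.1.eigenvalues)) *ᵥ c) := by
    conv_lhs => rw [hspec, Unitary.conjStarAlgAut_apply]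
    rw [hc, Matrix.mulVec_mulVec, Matrix.mulVec_mulVec, Matrix.mul_assoc]
  have key : (B *ᵥ w) ⬝ᵥ (B *ᵥ w) ≤ lam ^ 2 * (w ⬝ᵥ w) := by
    rw [hBw, unitary_dot _ hU]
    conv_rhs => rw [hwc]
    rw [unitary_dot _ hU]
    simp only [dotProduct, Matrix.mulVec_diagonal]
    rw [Finset.mul_sum]
    apply Finset.sum_le_sum
    intro i _
    have h1 : hB.1.eigenvalues i * c i * (hB.1.eigenvalues i * c i)
        ≤ lam ^ 2 * (c i * c i) := by
      have : hB.1.eigenvalues i ^ 2 ≤ lam ^ 2 :=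
        pow_le_pow_left₀ (hnn i) (hle i) 2
      nlinarith [sq_nonneg (c i)]
    simpa [RCLike.ofReal, Function.comp] using h1
  calc Real.sqrt ((B *ᵥ w) ⬝ᵥ (B *ᵥ w)) ≤ Real.sqrt (lam ^ 2 * (w ⬝ᵥ w)) :=
        Real.sqrt_le_sqrt key
    _ = lam * Real.sqrt (w ⬝ᵥ w) := by
        rw [Real.sqrt_mul (sq_nonneg _), Real.sqrt_sq (psd_sup_nonneg hB)]

end Aux

/-- For `S ∈ ℝ^{p×m}` (with `p ≥ m`) and `H` symmetric positive definite, every real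
eigenvalue `μ` of the Moore–Penrose pseudoinverse `(H S Sᵀ)^†` satisfies
`μ ≤ λ_max((S Sᵀ)^†) · λ_max(H⁻¹)`. -/
theorem pseudoinverse_lambda_max_bound
    (p m : ℕ) [NeZero p] (hpm : m ≤ p)
    (S : Matrix (Fin p) (Fin m) ℝ) (H : Matrix (Fin p) (Fin p) ℝ)
    (hH : H.PosDef)
    (P Q : Matrix (Fin p) (Fin p) ℝ)
    (hP : IsMoorePenrose (H * S * Sᵀ) P)
    (hQ : IsMoorePenrose (S * Sᵀ) Q)
    (hQh : Q.IsHermitian) (hHinv : (H⁻¹).IsHermitian) :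
    ∀ (μ : ℝ) (x : Fin p → ℝ), x ≠ 0 → P.mulVec x = μ • x →
      μ ≤ (⨆ i, hQh.eigenvalues i) * (⨆ i, hHinv.eigenvalues i) := by
  intro μ x hx hPx
  obtain ⟨hMPM, hPMP, hMPs, hPMs⟩ := hP
  obtain ⟨hAQA, hQAQ, hAQs, hQAs⟩ := hQ
  have hQt : Qᵀ = Q := by
    rw [← Matrix.conjTranspose_eq_transpose_of_trivial]; exact hQh
  -- Q is PSD
  have hQpsd : Q.PosSemidef := by
    have h := Matrix.posSemidef_self_mul_conjTranspose (Q * S)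
    have : (Q * S) * (Q * S)ᴴ = Q := by
      rw [Matrix.conjTranspose_eq_transpose_of_trivial, Matrix.transpose_mul, hQt]
      calc Q * S * (Sᵀ * Q) = Q * (S * Sᵀ) * Q := by
            simp only [Matrix.mul_assoc]
        _ = Q := hQAQ
    rwa [this] at h
  have hHipd : (H⁻¹).PosDef := hH.inv
  have hHipsd : (H⁻¹).PosSemidef := hHipd.posSemidef
  have hlQ : (0:ℝ) ≤ ⨆ i, hQh.eigenvalues i := psd_sup_nonneg hQpsd
  have hlH : (0:ℝ) ≤ ⨆ i, hHinv.eigenvalues i := psd_sup_nonneg hHipsd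
  rcases le_or_gt μ 0 with hμ | hμ
  · exact hμ.trans (mul_nonneg hlQ hlH)
  -- positive eigenvalue case
  set M := H * S * Sᵀ with hMdef
  have hxr : x = μ⁻¹ • (P *ᵥ x) := by
    rw [hPx, smul_smul, inv_mul_cancel₀ hμ.ne', one_smul]
  have hPMx : (P * M) *ᵥ x = x := by
    conv_lhs => rw [hxr]
    rw [Matrix.mulVec_smul, Matrix.mulVec_mulVec, hPMP, hPx, smul_smul,
      inv_mul_cancel₀ hμ.ne', one_smul]
  set u := M *ᵥ x with hudef
  have hPu : P *ᵥ u = x := by rw [hudef, Matrix.mulVec_mulVec, hPMx]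
  have hu0 : u ≠ 0 := fun h => hx (by rw [← hPu, h, Matrix.mulVec_zero])
  have huu_nonneg : (0:ℝ) ≤ u ⬝ᵥ u := Finset.sum_nonneg fun i _ => mul_self_nonneg _
  have huu : (0:ℝ) < u ⬝ᵥ u :=
    lt_of_le_of_ne huu_nonneg (Ne.symm (fun h => hu0 (dotProduct_self_eq_zero.mp h)))
  -- orthogonality: μ * (u ⬝ᵥ u) = x ⬝ᵥ u
  have hd : P *ᵥ (u - μ⁻¹ • x) = 0 := by
    rw [Matrix.mulVec_sub, hPu, Matrix.mulVec_smul, hPx, smul_smul,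
      inv_mul_cancel₀ hμ.ne', one_smul, sub_self]
  have hMPu : (M * P) *ᵥ u = u := by
    rw [← Matrix.mulVec_mulVec, hPu]
  have horth : (u - μ⁻¹ • x) ⬝ᵥ u = 0 := by
    calc (u - μ⁻¹ • x) ⬝ᵥ u = (u - μ⁻¹ • x) ⬝ᵥ ((M * P) *ᵥ u) := by rw [hMPu]
      _ = ((M * P)ᵀ *ᵥ (u - μ⁻¹ • x)) ⬝ᵥ u := by
          rw [Matrix.dotProduct_mulVec, ← Matrix.mulVec_transpose]
      _ = ((M * P) *ᵥ (u - μ⁻¹ • x)) ⬝ᵥ u := by rw [hMPs]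
      _ = (M *ᵥ (P *ᵥ (u - μ⁻¹ • x))) ⬝ᵥ u := by rw [Matrix.mulVec_mulVec]
      _ = 0 := by rw [hd, Matrix.mulVec_zero, zero_dotProduct]
  have hxu : x ⬝ᵥ u = μ * (u ⬝ᵥ u) := by
    rw [sub_dotProduct, smul_dotProduct, sub_eq_zero] at horth
    rw [smul_eq_mul] at horth
    field_simp at horth ⊢
    linarith
  have hAt : (S * Sᵀ)ᵀ = S * Sᵀ := by
    rw [Matrix.transpose_mul, Matrix.transpose_transpose]
  have hxA : x = (S * Sᵀ) *ᵥ ((Hᵀ * Pᵀ) *ᵥ x) := by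
    conv_lhs => rw [← hPMx, ← hPMs]
    rw [Matrix.mulVec_mulVec, hMdef]
    congr 1
    simp only [Matrix.transpose_mul, Matrix.transpose_transpose, Matrix.mul_assoc]
  have hQA : Q * (S * Sᵀ) = (S * Sᵀ) * Q := by
    conv_lhs => rw [← hQAs]
    rw [Matrix.transpose_mul, hQt, hAt]
  have hmat : Q * (S * Sᵀ) * (S * Sᵀ) = S * Sᵀ := by rw [hQA]; exact hAQA
  have hQv : Q *ᵥ ((S * Sᵀ) *ᵥ x) = x := by
    calc Q *ᵥ ((S * Sᵀ) *ᵥ x) = (Q * (S * Sᵀ)) *ᵥ x := by rw [Matrix.mulVec_mulVec]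
      _ = (Q * (S * Sᵀ)) *ᵥ ((S * Sᵀ) *ᵥ ((Hᵀ * Pᵀ) *ᵥ x)) := by rw [← hxA]
      _ = (Q * (S * Sᵀ) * (S * Sᵀ)) *ᵥ ((Hᵀ * Pᵀ) *ᵥ x) := by rw [Matrix.mulVec_mulVec]
      _ = (S * Sᵀ) *ᵥ ((Hᵀ * Pᵀ) *ᵥ x) := by rw [hmat]
      _ = x := hxA.symm
  have hu_eq : u = H *ᵥ ((S * Sᵀ) *ᵥ x) := by
    rw [hudef, hMdef, Matrix.mul_assoc, ← Matrix.mulVec_mulVec]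
  have hdet : IsUnit H.det := (Matrix.isUnit_iff_isUnit_det _).mp hH.isUnit
  have hv : (S * Sᵀ) *ᵥ x = H⁻¹ *ᵥ u := by
    rw [hu_eq, Matrix.mulVec_mulVec, Matrix.nonsing_inv_mul H hdet, Matrix.one_mulVec]
  have hx_eq : x = Q *ᵥ (H⁻¹ *ᵥ u) := by rw [← hv, hQv]
  have b1 : Real.sqrt (x ⬝ᵥ x) ≤
      (⨆ i, hQh.eigenvalues i) * Real.sqrt ((H⁻¹ *ᵥ u) ⬝ᵥ (H⁻¹ *ᵥ u)) := by
    conv_lhs => rw [hx_eq]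
    exact psd_mulVec_bound hQpsd _
  have b2 : Real.sqrt ((H⁻¹ *ᵥ u) ⬝ᵥ (H⁻¹ *ᵥ u)) ≤
      (⨆ i, hHinv.eigenvalues i) * Real.sqrt (u ⬝ᵥ u) := psd_mulVec_bound hHipsd u
  have cs : x ⬝ᵥ u ≤ Real.sqrt (x ⬝ᵥ x) * Real.sqrt (u ⬝ᵥ u) := dot_cs x u
  have hmain : μ * (u ⬝ᵥ u) ≤
      ((⨆ i, hQh.eigenvalues i) * (⨆ i, hHinv.eigenvalues i)) * (u ⬝ᵥ u) := by
    rw [← hxu]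
    calc x ⬝ᵥ u ≤ Real.sqrt (x ⬝ᵥ x) * Real.sqrt (u ⬝ᵥ u) := cs
      _ ≤ ((⨆ i, hQh.eigenvalues i) * ((⨆ i, hHinv.eigenvalues i) * Real.sqrt (u ⬝ᵥ u)))
            * Real.sqrt (u ⬝ᵥ u) := by
          apply mul_le_mul_of_nonneg_right _ (Real.sqrt_nonneg _)
          exact b1.trans (mul_le_mul_of_nonneg_left b2 hlQ)
      _ = ((⨆ i, hQh.eigenvalues i) * (⨆ i, hHinv.eigenvalues i))
            * (Real.sqrt (u ⬝ᵥ u) * Real.sqrt (u ⬝ᵥ u)) := by ring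
      _ = ((⨆ i, hQh.eigenvalues i) * (⨆ i, hHinv.eigenvalues i)) * (u ⬝ᵥ u) := by
          rw [Real.mul_self_sqrt huu_nonneg]
  exact le_of_mul_le_mul_right hmain huu
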